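/- Let Ω ⊂ ℝⁿ be a bounded open set, p ∈ (1,∞), s ∈ (0,1), ε > 0, and let P₁ be the eigenvalue-clipping projection P₁(V diag(λ_i) Vᵀ) = V diag(max(λ_i,ε)) Vᵀ of SYM(m) onto SPD^spec_{[ε,∞)}(m). If w ∈ W^{s,p}(Ω; SYM(m)), then v := P₁∘w ∈ W^{s,p}(Ω; SPD^spec_{[ε,∞)}(m)); moreover the Gagliardo seminorm does not increase, |v|_{W^{s,p}} ≤ |w|_{W^{s,p}}, and ‖v‖_{L^p}^p ≤ 2^{p−1}(m ε²)^{p/2}·|Ω| + 2^{p−1}‖w‖_{L^p}^p. -/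

import Mathlib

open Matrix BigOperators

/-- The Frobenius norm of a real square matrix. -/
noncomputable def frobNorm {m : ℕ} (A : Matrix (Fin m) (Fin m) ℝ) : ℝ :=
  Real.sqrt (∑ i, ∑ j, (A i j) ^ 2)

/-- The eigenvalue-clipping projection `P₁` of symmetric matrices onto
`SPD^spec_{[ε,∞)}`, defined via the spectral decomposition by
`P₁(V diag(λ_i) Vᵀ) = V diag(max(λ_i, ε)) Vᵀ`. -/
noncomputable def clipProj {m : ℕ} (ε : ℝ) (A : Matrix (Fin m) (Fin m) ℝ) :
    Matrix (Fin m) (Fin m) ℝ :=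
  if h : A.IsHermitian then
    (h.eigenvectorUnitary : Matrix (Fin m) (Fin m) ℝ) *
      Matrix.diagonal (fun i => max (h.eigenvalues i) ε) *
      (star (h.eigenvectorUnitary : Matrix (Fin m) (Fin m) ℝ))
  else A

open MeasureTheory
open scoped ENNReal

noncomputable instance matrixMeasurableSpace {m : ℕ} :
    MeasurableSpace (Matrix (Fin m) (Fin m) ℝ) := borel _

instance matrixBorelSpace {m : ℕ} : BorelSpace (Matrix (Fin m) (Fin m) ℝ) := ⟨rfl⟩

/-- The `p`-th power of the `L^p(Ω)`-norm (Frobenius norm pointwise), as an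
extended nonnegative real. -/
noncomputable def lpPow {n m : ℕ} (Ω : Set (EuclideanSpace ℝ (Fin n))) (p : ℝ)
    (w : EuclideanSpace ℝ (Fin n) → Matrix (Fin m) (Fin m) ℝ) : ℝ≥0∞ :=
  ∫⁻ x in Ω, ENNReal.ofReal (frobNorm (w x) ^ p)

/-- The `p`-th power of the Gagliardo `W^{s,p}(Ω)`-seminorm (Frobenius norm
pointwise), as an extended nonnegative real. -/
noncomputable def gagliardoPow {n m : ℕ} (Ω : Set (EuclideanSpace ℝ (Fin n))) (p s : ℝ)
    (w : EuclideanSpace ℝ (Fin n) → Matrix (Fin m) (Fin m) ℝ) : ℝ≥0∞ :=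
  ∫⁻ x in Ω, ∫⁻ y in Ω,
    ENNReal.ofReal (frobNorm (w x - w y) ^ p / ‖x - y‖ ^ ((n : ℝ) + p * s))

/-- Membership in the Lebesgue set `L^p(Ω; K)` of matrix-valued functions with
values a.e. in `K`. -/
def MemLpSet {n m : ℕ} (Ω : Set (EuclideanSpace ℝ (Fin n))) (p : ℝ)
    (K : Set (Matrix (Fin m) (Fin m) ℝ))
    (w : EuclideanSpace ℝ (Fin n) → Matrix (Fin m) (Fin m) ℝ) : Prop :=
  AEMeasurable w (volume.restrict Ω) ∧ (∀ᵐ x ∂(volume.restrict Ω), w x ∈ K) ∧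
    lpPow Ω p w < ⊤

/-- Membership in the fractional Sobolev set `W^{s,p}(Ω; K)` of matrix-valued
functions with values a.e. in `K`. -/
def MemWsp {n m : ℕ} (Ω : Set (EuclideanSpace ℝ (Fin n))) (p s : ℝ)
    (K : Set (Matrix (Fin m) (Fin m) ℝ))
    (w : EuclideanSpace ℝ (Fin n) → Matrix (Fin m) (Fin m) ℝ) : Prop :=
  MemLpSet Ω p K w ∧ gagliardoPow Ω p s w < ⊤

open scoped NNReal

namespace ClipAux

variable {m : ℕ} {ε : ℝ}

lemma isHermitian_of_transpose {A : Matrix (Fin m) (Fin m) ℝ} (h : Aᵀ = A) : A.IsHermitian := by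
  rw [Matrix.IsHermitian, Matrix.conjTranspose_eq_transpose_of_trivial, h]

noncomputable def frobSq (A : Matrix (Fin m) (Fin m) ℝ) : ℝ := ∑ i, ∑ j, (A i j) ^ 2

lemma frobSq_nonneg (A : Matrix (Fin m) (Fin m) ℝ) : 0 ≤ frobSq A := by
  unfold frobSq; positivity

lemma frobNorm_def (A : Matrix (Fin m) (Fin m) ℝ) : frobNorm A = Real.sqrt (frobSq A) := rfl

lemma frobNorm_nonneg (A : Matrix (Fin m) (Fin m) ℝ) : 0 ≤ frobNorm A := Real.sqrt_nonneg _

lemma frobSq_eq_trace (A : Matrix (Fin m) (Fin m) ℝ) : frobSq A = Matrix.trace (Aᴴ * A) := by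
  unfold frobSq
  rw [Finset.sum_comm]
  simp only [Matrix.trace, Matrix.diag, Matrix.mul_apply, Matrix.conjTranspose_apply,
    star_trivial, sq]

lemma frobSq_mul_unitary_left {U : Matrix (Fin m) (Fin m) ℝ} (hU : star U * U = 1)
    (N : Matrix (Fin m) (Fin m) ℝ) : frobSq (U * N) = frobSq N := by
  have hU' : Uᴴ * U = 1 := by rwa [← Matrix.star_eq_conjTranspose]
  rw [frobSq_eq_trace, frobSq_eq_trace, Matrix.conjTranspose_mul, Matrix.mul_assoc,
    ← Matrix.mul_assoc Uᴴ U N, hU', Matrix.one_mul]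

lemma frobSq_mul_star_unitary_right {V : Matrix (Fin m) (Fin m) ℝ} (hV : star V * V = 1)
    (N : Matrix (Fin m) (Fin m) ℝ) : frobSq (N * star V) = frobSq N := by
  have hV' : Vᴴ * V = 1 := by rwa [← Matrix.star_eq_conjTranspose]
  rw [frobSq_eq_trace, frobSq_eq_trace, Matrix.star_eq_conjTranspose,
    Matrix.conjTranspose_mul, Matrix.conjTranspose_conjTranspose]
  have h1 : V * Nᴴ * (N * Vᴴ) = V * (Nᴴ * N) * Vᴴ := by
    simp only [Matrix.mul_assoc]
  rw [h1, Matrix.trace_mul_cycle, ← Matrix.mul_assoc, hV', Matrix.one_mul]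

lemma conj_diag_sub_conj_diag {U V : Matrix (Fin m) (Fin m) ℝ}
    (hU2 : U * star U = 1) (hV2 : V * star V = 1) (a b : Fin m → ℝ) :
    U * Matrix.diagonal a * star U - V * Matrix.diagonal b * star V
      = U * (Matrix.diagonal a * (star U * V) - (star U * V) * Matrix.diagonal b) * star V := by
  rw [Matrix.mul_sub, Matrix.sub_mul]
  congr 1
  · symm
    calc U * (Matrix.diagonal a * (star U * V)) * star V
        = U * Matrix.diagonal a * star U * (V * star V) := by simp only [Matrix.mul_assoc]
      _ = U * Matrix.diagonal a * star U := by rw [hV2, Matrix.mul_one]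
  · symm
    calc U * (star U * V * Matrix.diagonal b) * star V
        = U * star U * (V * (Matrix.diagonal b * star V)) := by simp only [Matrix.mul_assoc]
      _ = V * Matrix.diagonal b * star V := by
          rw [hU2, Matrix.one_mul, ← Matrix.mul_assoc]

lemma frobSq_conj_sub_conj {U V : Matrix (Fin m) (Fin m) ℝ}
    (hU : U ∈ Matrix.unitaryGroup (Fin m) ℝ) (hV : V ∈ Matrix.unitaryGroup (Fin m) ℝ)
    (a b : Fin m → ℝ) :
    frobSq (U * Matrix.diagonal a * star U - V * Matrix.diagonal b * star V)
      = ∑ i, ∑ j, (a i - b j) ^ 2 * ((star U * V) i j) ^ 2 := by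
  have hU1 : star U * U = 1 := Matrix.mem_unitaryGroup_iff'.mp hU
  have hU2 : U * star U = 1 := Matrix.mem_unitaryGroup_iff.mp hU
  have hV1 : star V * V = 1 := Matrix.mem_unitaryGroup_iff'.mp hV
  have hV2 : V * star V = 1 := Matrix.mem_unitaryGroup_iff.mp hV
  rw [conj_diag_sub_conj_diag hU2 hV2, frobSq_mul_star_unitary_right hV1,
    frobSq_mul_unitary_left hU1]
  unfold frobSq
  refine Finset.sum_congr rfl fun i _ => Finset.sum_congr rfl fun j _ => ?_
  rw [Matrix.sub_apply, Matrix.diagonal_mul, Matrix.mul_diagonal]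
  ring

lemma frobSq_conj_sub_conj_le {U V : Matrix (Fin m) (Fin m) ℝ}
    (hU : U ∈ Matrix.unitaryGroup (Fin m) ℝ) (hV : V ∈ Matrix.unitaryGroup (Fin m) ℝ)
    (a b a' b' : Fin m → ℝ) (h : ∀ i j, |a' i - b' j| ≤ |a i - b j|) :
    frobSq (U * Matrix.diagonal a' * star U - V * Matrix.diagonal b' * star V)
      ≤ frobSq (U * Matrix.diagonal a * star U - V * Matrix.diagonal b * star V) := by
  rw [frobSq_conj_sub_conj hU hV, frobSq_conj_sub_conj hU hV]
  refine Finset.sum_le_sum fun i _ => Finset.sum_le_sum fun j _ => ?_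
  refine mul_le_mul_of_nonneg_right ?_ (sq_nonneg _)
  rw [← sq_abs (a' i - b' j), ← sq_abs (a i - b j)]
  exact pow_le_pow_left₀ (abs_nonneg _) (h i j) 2

lemma spectral_real {A : Matrix (Fin m) (Fin m) ℝ} (hA : A.IsHermitian) :
    A = (hA.eigenvectorUnitary : Matrix (Fin m) (Fin m) ℝ) * Matrix.diagonal hA.eigenvalues *
      star (hA.eigenvectorUnitary : Matrix (Fin m) (Fin m) ℝ) := by
  conv_lhs => rw [hA.spectral_theorem]
  rw [RCLike.ofReal_real_eq_id, Function.id_comp, Unitary.conjStarAlgAut_apply]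

lemma clip_eq {A : Matrix (Fin m) (Fin m) ℝ} (hA : A.IsHermitian) :
    clipProj ε A = (hA.eigenvectorUnitary : Matrix (Fin m) (Fin m) ℝ) *
      Matrix.diagonal (fun i => max (hA.eigenvalues i) ε) *
      star (hA.eigenvectorUnitary : Matrix (Fin m) (Fin m) ℝ) := dif_pos hA

lemma frobSq_clip_sub_clip_le {A B : Matrix (Fin m) (Fin m) ℝ}
    (hA : A.IsHermitian) (hB : B.IsHermitian) :
    frobSq (clipProj ε A - clipProj ε B) ≤ frobSq (A - B) := by
  rw [clip_eq hA, clip_eq hB]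
  conv_rhs => rw [spectral_real hA, spectral_real hB]
  exact frobSq_conj_sub_conj_le hA.eigenvectorUnitary.2 hB.eigenvectorUnitary.2 _ _ _ _
    (fun i j => abs_max_sub_max_le_abs _ _ _)

lemma frobSq_diagonal (d : Fin m → ℝ) : frobSq (Matrix.diagonal d) = ∑ i, d i ^ 2 := by
  unfold frobSq
  refine Finset.sum_congr rfl fun i _ => ?_
  rw [Finset.sum_eq_single i]
  · rw [Matrix.diagonal_apply_eq]
  · intro j _ hj
    rw [Matrix.diagonal_apply_ne _ (Ne.symm hj)]
    exact zero_pow two_ne_zero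
  · simp

lemma frobSq_conj_diag {U : Matrix (Fin m) (Fin m) ℝ}
    (hU : U ∈ Matrix.unitaryGroup (Fin m) ℝ) (d : Fin m → ℝ) :
    frobSq (U * Matrix.diagonal d * star U) = ∑ i, d i ^ 2 := by
  have hU1 : star U * U = 1 := Matrix.mem_unitaryGroup_iff'.mp hU
  rw [frobSq_mul_star_unitary_right hU1, frobSq_mul_unitary_left hU1, frobSq_diagonal]

lemma frobSq_clip_le {A : Matrix (Fin m) (Fin m) ℝ} (hA : A.IsHermitian) :
    frobSq (clipProj ε A) ≤ (m : ℝ) * ε ^ 2 + frobSq A := by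
  rw [clip_eq hA, frobSq_conj_diag hA.eigenvectorUnitary.2]
  conv_rhs => rw [spectral_real hA]
  rw [frobSq_conj_diag hA.eigenvectorUnitary.2]
  calc ∑ i, max (hA.eigenvalues i) ε ^ 2
      ≤ ∑ i, (ε ^ 2 + hA.eigenvalues i ^ 2) := by
        refine Finset.sum_le_sum fun i _ => ?_
        rcases max_cases (hA.eigenvalues i) ε with ⟨h1, _⟩ | ⟨h1, _⟩ <;> rw [h1] <;>
          nlinarith [sq_nonneg (hA.eigenvalues i), sq_nonneg ε]
    _ = (m : ℝ) * ε ^ 2 + ∑ i, hA.eigenvalues i ^ 2 := by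
        rw [Finset.sum_add_distrib, Finset.sum_const, Finset.card_univ, Fintype.card_fin,
          nsmul_eq_mul]

lemma clip_posDef {A : Matrix (Fin m) (Fin m) ℝ} (hA : A.IsHermitian) (hε : 0 < ε) :
    (clipProj ε A).PosDef := by
  rw [clip_eq hA]
  set U := (hA.eigenvectorUnitary : Matrix (Fin m) (Fin m) ℝ) with hUdef
  have hU2 : U * star U = 1 := Unitary.coe_mul_star_self hA.eigenvectorUnitary
  have hsplit : Matrix.diagonal (fun i => max (hA.eigenvalues i) ε)
      = Matrix.diagonal (fun i => max (hA.eigenvalues i) ε - ε)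
        + ε • (1 : Matrix (Fin m) (Fin m) ℝ) := by
    rw [Matrix.smul_one_eq_diagonal, Matrix.diagonal_add]
    congr 1
    funext i
    ring
  rw [hsplit, Matrix.mul_add, Matrix.add_mul]
  have h1 : U * (ε • (1 : Matrix (Fin m) (Fin m) ℝ)) * star U
      = ε • (1 : Matrix (Fin m) (Fin m) ℝ) := by
    rw [mul_smul_comm, Matrix.mul_one, smul_mul_assoc, hU2]
  rw [h1]
  refine Matrix.PosDef.posSemidef_add ?_ ?_
  · have hd : Matrix.PosSemidef
        (Matrix.diagonal (fun i => max (hA.eigenvalues i) ε - ε)) :=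
      Matrix.PosSemidef.diagonal (fun i => sub_nonneg.mpr (le_max_right _ _))
    have := hd.mul_mul_conjTranspose_same U
    rwa [← Matrix.star_eq_conjTranspose] at this
  · rw [Matrix.smul_one_eq_diagonal]
    exact Matrix.PosDef.diagonal fun i => hε

lemma clip_spectrum {A : Matrix (Fin m) (Fin m) ℝ} (hA : A.IsHermitian) {μ : ℝ}
    (hμ : μ ∈ spectrum ℝ (clipProj ε A)) : ε ≤ μ := by
  rw [clip_eq hA] at hμ
  rw [Unitary.spectrum_star_right_conjugate] at hμ
  rw [spectrum_diagonal] at hμ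
  obtain ⟨i, rfl⟩ := hμ
  exact le_max_right _ _

end ClipAux

namespace ClipAux

variable {m : ℕ} {ε : ℝ}

noncomputable def symPart (A : Matrix (Fin m) (Fin m) ℝ) : Matrix (Fin m) (Fin m) ℝ :=
  (1 / 2 : ℝ) • (A + Aᵀ)

lemma symPart_isHermitian (A : Matrix (Fin m) (Fin m) ℝ) : (symPart A).IsHermitian := by
  apply isHermitian_of_transpose
  unfold symPart
  rw [Matrix.transpose_smul, Matrix.transpose_add, Matrix.transpose_transpose, add_comm]

lemma symPart_eq_self {A : Matrix (Fin m) (Fin m) ℝ} (h : Aᵀ = A) : symPart A = A := by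
  unfold symPart
  rw [h]
  ext i j
  simp [Matrix.smul_apply, Matrix.add_apply]
  ring

lemma symPart_sub (A B : Matrix (Fin m) (Fin m) ℝ) :
    symPart A - symPart B = symPart (A - B) := by
  unfold symPart
  rw [Matrix.transpose_sub]
  ext i j
  simp [Matrix.smul_apply, Matrix.add_apply, Matrix.sub_apply]
  ring

lemma frobSq_symPart_le (X : Matrix (Fin m) (Fin m) ℝ) : frobSq (symPart X) ≤ frobSq X := by
  have h : ∀ i j, (symPart X i j) ^ 2 ≤ (X i j ^ 2) / 2 + (X j i ^ 2) / 2 := by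
    intro i j
    have : symPart X i j = (1 / 2) * (X i j + X j i) := by
      simp [symPart, Matrix.smul_apply, Matrix.add_apply, Matrix.transpose_apply]
    rw [this]
    nlinarith [sq_nonneg (X i j - X j i)]
  calc frobSq (symPart X) ≤ ∑ i, ∑ j, ((X i j ^ 2) / 2 + (X j i ^ 2) / 2) :=
        Finset.sum_le_sum fun i _ => Finset.sum_le_sum fun j _ => h i j
    _ = (∑ i, ∑ j, (X i j ^ 2) / 2) + ∑ i, ∑ j, (X j i ^ 2) / 2 := by
        rw [← Finset.sum_add_distrib]
        exact Finset.sum_congr rfl fun i _ => Finset.sum_add_distrib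
    _ = (∑ i, ∑ j, (X i j ^ 2) / 2) + ∑ j, ∑ i, (X j i ^ 2) / 2 := by
        rw [Finset.sum_comm (f := fun i j => (X j i ^ 2) / 2)]
    _ = frobSq X := by
        rw [← Finset.sum_add_distrib]
        unfold frobSq
        refine Finset.sum_congr rfl fun i _ => ?_
        rw [← Finset.sum_add_distrib]
        refine Finset.sum_congr rfl fun j _ => ?_
        ring

lemma entry_abs_le_frobNorm (A : Matrix (Fin m) (Fin m) ℝ) (i j : Fin m) :
    |A i j| ≤ frobNorm A := by
  rw [frobNorm, ← Real.sqrt_sq_eq_abs]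
  apply Real.sqrt_le_sqrt
  calc A i j ^ 2 ≤ ∑ j', A i j' ^ 2 :=
        Finset.single_le_sum (f := fun j' => A i j' ^ 2) (fun _ _ => sq_nonneg _)
          (Finset.mem_univ j)
    _ ≤ ∑ i', ∑ j', A i' j' ^ 2 :=
        Finset.single_le_sum (f := fun i' => ∑ j', A i' j' ^ 2)
          (fun _ _ => by positivity) (Finset.mem_univ i)

lemma frobNorm_le_of_entries (A : Matrix (Fin m) (Fin m) ℝ) {c : ℝ} (hc : 0 ≤ c)
    (h : ∀ i j, |A i j| ≤ c) : frobNorm A ≤ (m : ℝ) * c := by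
  rw [frobNorm]
  have hsum : ∑ i, ∑ j, (A i j) ^ 2 ≤ ((m : ℝ) * c) ^ 2 := by
    calc ∑ i, ∑ j, (A i j) ^ 2 ≤ ∑ _i : Fin m, ∑ _j : Fin m, c ^ 2 := by
          refine Finset.sum_le_sum fun i _ => Finset.sum_le_sum fun j _ => ?_
          rw [← sq_abs]
          exact pow_le_pow_left₀ (abs_nonneg _) (h i j) 2
      _ = ((m : ℝ) * c) ^ 2 := by
          simp [Finset.sum_const, Finset.card_univ, nsmul_eq_mul]
          ring
  calc Real.sqrt (∑ i, ∑ j, (A i j) ^ 2) ≤ Real.sqrt (((m : ℝ) * c) ^ 2) :=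
        Real.sqrt_le_sqrt hsum
    _ = (m : ℝ) * c := Real.sqrt_sq (by positivity)

/-- a homeomorphism between matrices and the plain pi type -/
def matHomeo : Matrix (Fin m) (Fin m) ℝ ≃ₜ (Fin m → Fin m → ℝ) where
  toFun A := fun i j => A i j
  invFun x := Matrix.of x
  left_inv _ := rfl
  right_inv _ := rfl
  continuous_toFun :=
    continuous_pi fun i => continuous_pi fun j => continuous_id.matrix_elem i j
  continuous_invFun := continuous_matrix fun i j => (continuous_apply j).comp (continuous_apply i)

lemma measurable_clipSym :
    Measurable (fun A : Matrix (Fin m) (Fin m) ℝ => clipProj ε (symPart A)) := by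
  have hcont : Continuous (fun A : Matrix (Fin m) (Fin m) ℝ => clipProj ε (symPart A)) := by
    let e : Matrix (Fin m) (Fin m) ℝ ≃ₜ (Fin m → Fin m → ℝ) := matHomeo
    have hG : LipschitzWith (m : ℝ≥0)
        (fun x : Fin m → Fin m → ℝ => e (clipProj ε (symPart (e.symm x)))) := by
      apply LipschitzWith.of_dist_le_mul
      intro x y
      rw [dist_eq_norm, dist_eq_norm]
      set X := clipProj ε (symPart (e.symm x)) with hX
      set Y := clipProj ε (symPart (e.symm y)) with hY
      have hfrob : frobNorm (X - Y) ≤ frobNorm (e.symm x - e.symm y) := by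
        rw [frobNorm_def, frobNorm_def]
        apply Real.sqrt_le_sqrt
        calc frobSq (X - Y) ≤ frobSq (symPart (e.symm x) - symPart (e.symm y)) :=
              frobSq_clip_sub_clip_le (symPart_isHermitian _) (symPart_isHermitian _)
          _ = frobSq (symPart (e.symm x - e.symm y)) := by rw [symPart_sub]
          _ ≤ frobSq (e.symm x - e.symm y) := frobSq_symPart_le _
      have hnorm1 : ‖e X - e Y‖ ≤ frobNorm (X - Y) := by
        rw [pi_norm_le_iff_of_nonneg (frobNorm_nonneg _)]
        intro i
        rw [pi_norm_le_iff_of_nonneg (frobNorm_nonneg _)]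
        intro j
        rw [Real.norm_eq_abs]
        exact entry_abs_le_frobNorm (X - Y) i j
      have hnorm2 : frobNorm (e.symm x - e.symm y) ≤ (m : ℝ) * ‖x - y‖ := by
        apply frobNorm_le_of_entries _ (norm_nonneg _)
        intro i j
        calc |(e.symm x - e.symm y) i j| = ‖(x - y) i j‖ := by rw [Real.norm_eq_abs]; rfl
          _ ≤ ‖(x - y) i‖ := norm_le_pi_norm _ j
          _ ≤ ‖x - y‖ := norm_le_pi_norm _ i
      have : e X - e Y = e (X - Y) := rfl
      rw [this]
      push_cast
      calc ‖e (X - Y)‖ ≤ frobNorm (X - Y) := hnorm1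
        _ ≤ frobNorm (e.symm x - e.symm y) := hfrob
        _ ≤ (m : ℝ) * ‖x - y‖ := hnorm2
    have h2 : (fun A : Matrix (Fin m) (Fin m) ℝ => clipProj ε (symPart A))
        = e.symm ∘ (fun x => e (clipProj ε (symPart (e.symm x)))) ∘ e := rfl
    rw [h2]
    exact e.symm.continuous.comp (hG.continuous.comp e.continuous)
  exact hcont.measurable

lemma sqrt_add_le {x y : ℝ} (hx : 0 ≤ x) (hy : 0 ≤ y) :
    Real.sqrt (x + y) ≤ Real.sqrt x + Real.sqrt y := by
  have h : x + y ≤ (Real.sqrt x + Real.sqrt y) ^ 2 := by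
    nlinarith [Real.sq_sqrt hx, Real.sq_sqrt hy, Real.sqrt_nonneg x, Real.sqrt_nonneg y,
      mul_nonneg (Real.sqrt_nonneg x) (Real.sqrt_nonneg y)]
  calc Real.sqrt (x + y) ≤ Real.sqrt ((Real.sqrt x + Real.sqrt y) ^ 2) := Real.sqrt_le_sqrt h
    _ = Real.sqrt x + Real.sqrt y := Real.sqrt_sq (by positivity)

lemma real_add_rpow_le {a b p : ℝ} (ha : 0 ≤ a) (hb : 0 ≤ b) (hp : 1 ≤ p) :
    (a + b) ^ p ≤ 2 ^ (p - 1) * (a ^ p + b ^ p) := by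
  have key := NNReal.rpow_add_le_mul_rpow_add_rpow a.toNNReal b.toNNReal hp
  have h1 : ((a.toNNReal + b.toNNReal : ℝ≥0) : ℝ) = a + b := by
    simp [Real.coe_toNNReal _ ha, Real.coe_toNNReal _ hb]
  calc (a + b) ^ p = (((a.toNNReal + b.toNNReal : ℝ≥0) : ℝ)) ^ p := by rw [h1]
    _ = (((a.toNNReal + b.toNNReal) ^ p : ℝ≥0) : ℝ) := by rw [NNReal.coe_rpow]
    _ ≤ (((2 : ℝ≥0) ^ (p - 1) * (a.toNNReal ^ p + b.toNNReal ^ p) : ℝ≥0) : ℝ) :=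
        NNReal.coe_le_coe.mpr key
    _ = 2 ^ (p - 1) * (a ^ p + b ^ p) := by
        push_cast [NNReal.coe_rpow, Real.coe_toNNReal _ ha, Real.coe_toNNReal _ hb]
        ring

lemma clip_pointwise_bound {A : Matrix (Fin m) (Fin m) ℝ} (hA : A.IsHermitian) {p : ℝ}
    (hp : 1 ≤ p) :
    frobNorm (clipProj ε A) ^ p
      ≤ 2 ^ (p - 1) * ((m : ℝ) * ε ^ 2) ^ (p / 2) + 2 ^ (p - 1) * frobNorm A ^ p := by
  have h0 : (0 : ℝ) ≤ (m : ℝ) * ε ^ 2 := by positivity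
  have ha : frobNorm (clipProj ε A) ≤ Real.sqrt ((m : ℝ) * ε ^ 2) + frobNorm A := by
    rw [frobNorm_def, frobNorm_def]
    calc Real.sqrt (frobSq (clipProj ε A))
        ≤ Real.sqrt ((m : ℝ) * ε ^ 2 + frobSq A) := Real.sqrt_le_sqrt (frobSq_clip_le hA)
      _ ≤ Real.sqrt ((m : ℝ) * ε ^ 2) + Real.sqrt (frobSq A) := sqrt_add_le h0 (frobSq_nonneg A)
  have hb : frobNorm (clipProj ε A) ^ p ≤ (Real.sqrt ((m : ℝ) * ε ^ 2) + frobNorm A) ^ p :=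
    Real.rpow_le_rpow (frobNorm_nonneg _) ha (by linarith)
  have hc : (Real.sqrt ((m : ℝ) * ε ^ 2) + frobNorm A) ^ p
      ≤ 2 ^ (p - 1) * ((Real.sqrt ((m : ℝ) * ε ^ 2)) ^ p + frobNorm A ^ p) :=
    real_add_rpow_le (Real.sqrt_nonneg _) (frobNorm_nonneg _) hp
  have hd : (Real.sqrt ((m : ℝ) * ε ^ 2)) ^ p = ((m : ℝ) * ε ^ 2) ^ (p / 2) := by
    rw [Real.sqrt_eq_rpow, ← Real.rpow_mul h0]
    rw [show 1 / 2 * p = p / 2 by ring]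
  rw [hd] at hc
  calc frobNorm (clipProj ε A) ^ p
      ≤ 2 ^ (p - 1) * (((m : ℝ) * ε ^ 2) ^ (p / 2) + frobNorm A ^ p) := le_trans hb hc
    _ = 2 ^ (p - 1) * ((m : ℝ) * ε ^ 2) ^ (p / 2) + 2 ^ (p - 1) * frobNorm A ^ p := by ring

end ClipAux


/-- Composing a function `w ∈ W^{s,p}(Ω; SYM(m))` with the eigenvalue-clipping
projection `P₁` yields `v = P₁ ∘ w ∈ W^{s,p}(Ω; SPD^spec_{[ε,∞)}(m))`; moreover the
Gagliardo seminorm does not increase and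
`‖v‖_{L^p}^p ≤ 2^{p−1} (m ε²)^{p/2} |Ω| + 2^{p−1} ‖w‖_{L^p}^p`. -/
theorem clipProj_comp_mem_Wsp {n m : ℕ} (Ω : Set (EuclideanSpace ℝ (Fin n)))
    (hΩo : IsOpen Ω) (hΩb : Bornology.IsBounded Ω)
    (p s ε : ℝ) (hp : 1 < p) (hs : s ∈ Set.Ioo (0 : ℝ) 1) (hε : 0 < ε)
    (w : EuclideanSpace ℝ (Fin n) → Matrix (Fin m) (Fin m) ℝ)
    (hw : MemWsp Ω p s {M | Mᵀ = M} w) :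
    MemWsp Ω p s {M | M.PosDef ∧ ∀ μ ∈ spectrum ℝ M, ε ≤ μ}
        (fun x => clipProj ε (w x)) ∧
      gagliardoPow Ω p s (fun x => clipProj ε (w x)) ≤ gagliardoPow Ω p s w ∧
      lpPow Ω p (fun x => clipProj ε (w x)) ≤
        ENNReal.ofReal (2 ^ (p - 1) * ((m : ℝ) * ε ^ 2) ^ (p / 2)) * volume Ω +
          ENNReal.ofReal (2 ^ (p - 1)) * lpPow Ω p w := by
  obtain ⟨⟨hmeas, hsymm, hLp⟩, hGag⟩ := hw
  have hherm : ∀ᵐ x ∂(volume.restrict Ω), (w x).IsHermitian :=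
    hsymm.mono fun x hx => ClipAux.isHermitian_of_transpose hx
  have hgle : gagliardoPow Ω p s (fun x => clipProj ε (w x)) ≤ gagliardoPow Ω p s w := by
    unfold gagliardoPow
    refine lintegral_mono_ae ?_
    filter_upwards [hherm] with x hx
    refine lintegral_mono_ae ?_
    filter_upwards [hherm] with y hy
    apply ENNReal.ofReal_le_ofReal
    have hnum : frobNorm (clipProj ε (w x) - clipProj ε (w y)) ^ p
        ≤ frobNorm (w x - w y) ^ p := by
      refine Real.rpow_le_rpow (ClipAux.frobNorm_nonneg _) ?_ (by linarith)
      rw [ClipAux.frobNorm_def, ClipAux.frobNorm_def]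
      exact Real.sqrt_le_sqrt (ClipAux.frobSq_clip_sub_clip_le hx hy)
    rcases eq_or_lt_of_le (Real.rpow_nonneg (norm_nonneg (x - y)) ((n : ℝ) + p * s)) with
      h0 | h0
    · rw [← h0, div_zero, div_zero]
    · exact (div_le_div_iff_of_pos_right h0).mpr hnum
  have hconst1 : (0 : ℝ) ≤ 2 ^ (p - 1) * ((m : ℝ) * ε ^ 2) ^ (p / 2) := by positivity
  have hlpbound : lpPow Ω p (fun x => clipProj ε (w x)) ≤
      ENNReal.ofReal (2 ^ (p - 1) * ((m : ℝ) * ε ^ 2) ^ (p / 2)) * volume Ω +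
        ENNReal.ofReal (2 ^ (p - 1)) * lpPow Ω p w := by
    unfold lpPow
    calc ∫⁻ x in Ω, ENNReal.ofReal (frobNorm ((fun x => clipProj ε (w x)) x) ^ p)
        ≤ ∫⁻ x in Ω, (ENNReal.ofReal (2 ^ (p - 1) * ((m : ℝ) * ε ^ 2) ^ (p / 2)) +
            ENNReal.ofReal (2 ^ (p - 1)) * ENNReal.ofReal (frobNorm (w x) ^ p)) := by
          refine lintegral_mono_ae ?_
          filter_upwards [hherm] with x hx
          calc ENNReal.ofReal (frobNorm ((fun x => clipProj ε (w x)) x) ^ p)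
              ≤ ENNReal.ofReal (2 ^ (p - 1) * ((m : ℝ) * ε ^ 2) ^ (p / 2) +
                  2 ^ (p - 1) * frobNorm (w x) ^ p) :=
                ENNReal.ofReal_le_ofReal (ClipAux.clip_pointwise_bound hx hp.le)
            _ = ENNReal.ofReal (2 ^ (p - 1) * ((m : ℝ) * ε ^ 2) ^ (p / 2)) +
                ENNReal.ofReal (2 ^ (p - 1)) * ENNReal.ofReal (frobNorm (w x) ^ p) := by
                rw [ENNReal.ofReal_add hconst1 (mul_nonneg (le_of_lt (Real.rpow_pos_of_pos two_pos _)) (Real.rpow_nonneg (ClipAux.frobNorm_nonneg _) _))]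
                congr 1
                rw [ENNReal.ofReal_mul (le_of_lt (Real.rpow_pos_of_pos two_pos _))]
      _ = ENNReal.ofReal (2 ^ (p - 1) * ((m : ℝ) * ε ^ 2) ^ (p / 2)) * volume Ω +
          ENNReal.ofReal (2 ^ (p - 1)) * ∫⁻ x in Ω, ENNReal.ofReal (frobNorm (w x) ^ p) := by
          rw [lintegral_add_left measurable_const,
            lintegral_const_mul' _ _ ENNReal.ofReal_ne_top, setLIntegral_const]
  have hclipmem : ∀ᵐ x ∂(volume.restrict Ω),
      (fun x => clipProj ε (w x)) x ∈ {M | M.PosDef ∧ ∀ μ' ∈ spectrum ℝ M, ε ≤ μ'} := by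
    filter_upwards [hherm] with x hx
    exact ⟨ClipAux.clip_posDef hx hε, fun μ' hμ' => ClipAux.clip_spectrum hx hμ'⟩
  have haem : AEMeasurable (fun x => clipProj ε (w x)) (volume.restrict Ω) := by
    obtain ⟨g, hg, hwg⟩ := hmeas
    refine ⟨fun x => clipProj ε (ClipAux.symPart (g x)), ClipAux.measurable_clipSym.comp hg, ?_⟩
    filter_upwards [hwg, hsymm] with x h1 h2
    show clipProj ε (w x) = clipProj ε (ClipAux.symPart (g x))
    rw [← h1, ClipAux.symPart_eq_self h2]
  have hvol : volume Ω < ⊤ := hΩb.measure_lt_top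
  have hLpv : lpPow Ω p (fun x => clipProj ε (w x)) < ⊤ := by
    refine lt_of_le_of_lt hlpbound ?_
    apply ENNReal.add_lt_top.mpr
    exact ⟨ENNReal.mul_lt_top ENNReal.ofReal_lt_top hvol,
      ENNReal.mul_lt_top ENNReal.ofReal_lt_top hLp⟩
  exact ⟨⟨⟨haem, hclipmem, hLpv⟩, lt_of_le_of_lt hgle hGag⟩, hgle, hlpbound⟩
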